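/- The most violated inequality of the exponential family can be found by componentwise minimization: given any point (x̂, ŷ, ẑ) with x̂ ∈ [L,U], 0 ≤ ŷ, and 0 ≤ ẑ ≤ 1, define Î = {i ∈ supp(w) : w i * x̂ i < w i * (L̆ i * (1 − ẑ) + Ŭ i * ẑ)}. Then for every I ⊆ supp(w), RHS(Î) ≤ RHS(I), where RHS(I) = (∑ i ∈ I, w i * (x̂ i − L̆ i * (1 − ẑ))) + (b + ∑ i ∉ I, w i * Ŭ i) * ẑ; consequently the inequality corresponding to Î has the largest violation ŷ − RHS(I) among the family. -/

import Mathlib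

open Finset

/-- The affine function `f(x) = w · x + b`. -/
noncomputable def fAff {η : ℕ} (w : Fin η → ℝ) (b : ℝ) (x : Fin η → ℝ) : ℝ :=
  (∑ i, w i * x i) + b

/-- The rectified linear unit. -/
noncomputable def ReLU (v : ℝ) : ℝ := max 0 v

/-- The box `[L, U]`. -/
def Box {η : ℕ} (L U : Fin η → ℝ) : Set (Fin η → ℝ) :=
  {x | ∀ i, L i ≤ x i ∧ x i ≤ U i}

/-- `L̆ i`. -/
noncomputable def Lbreve {η : ℕ} (w L U : Fin η → ℝ) (i : Fin η) : ℝ :=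
  if 0 ≤ w i then L i else U i

/-- `Ŭ i`. -/
noncomputable def Ubreve {η : ℕ} (w L U : Fin η → ℝ) (i : Fin η) : ℝ :=
  if 0 ≤ w i then U i else L i

/-- The graph of the ReLU neuron over the box. -/
noncomputable def grSet {η : ℕ} (w : Fin η → ℝ) (b : ℝ) (L U : Fin η → ℝ) :
    Set ((Fin η → ℝ) × ℝ) :=
  {p | ∃ x ∈ Box L U, p = (x, ReLU (fAff w b x))}

/-- The LP relaxation `P` of the ideal non-extended formulation. A point is
`(x, y, z)` with `x = p.1`, `y = p.2.1`, `z = p.2.2`. -/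
noncomputable def Pset {η : ℕ} (w : Fin η → ℝ) (b : ℝ) (L U : Fin η → ℝ) :
    Set ((Fin η → ℝ) × ℝ × ℝ) :=
  {p | p.1 ∈ Box L U ∧ 0 ≤ p.2.1 ∧ 0 ≤ p.2.2 ∧ p.2.2 ≤ 1 ∧ fAff w b p.1 ≤ p.2.1 ∧
    ∀ I : Finset (Fin η), (∀ i ∈ I, w i ≠ 0) →
      p.2.1 ≤ (∑ i ∈ I, w i * (p.1 i - Lbreve w L U i * (1 - p.2.2)))
        + (b + ∑ i ∈ Iᶜ, w i * Ubreve w L U i) * p.2.2}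

/-- The LP relaxation `R` of the big-`M` formulation. -/
noncomputable def Rset {η : ℕ} (w : Fin η → ℝ) (b : ℝ) (L U : Fin η → ℝ) :
    Set ((Fin η → ℝ) × ℝ × ℝ) :=
  {p | p.1 ∈ Box L U ∧ 0 ≤ p.2.1 ∧ 0 ≤ p.2.2 ∧ p.2.2 ≤ 1 ∧ fAff w b p.1 ≤ p.2.1 ∧
    p.2.1 ≤ fAff w b p.1 - ((∑ i, w i * Lbreve w L U i) + b) * (1 - p.2.2) ∧
    p.2.1 ≤ ((∑ i, w i * Ubreve w L U i) + b) * p.2.2}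

/-- The LP relaxation `Q` of the multiple-choice extended formulation. A point is
`(x, y, z, x⁰, x¹, y⁰, y¹)`. -/
noncomputable def Qset {η : ℕ} (w : Fin η → ℝ) (b : ℝ) (L U : Fin η → ℝ) :
    Set ((Fin η → ℝ) × ℝ × ℝ × (Fin η → ℝ) × (Fin η → ℝ) × ℝ × ℝ) :=
  {q | match q with
    | (x, y, z, x0, x1, y0, y1) =>
      x = x0 + x1 ∧ y = y0 + y1 ∧ y0 = 0 ∧
      (∑ i, w i * x0 i) + b * (1 - z) ≤ 0 ∧
      y1 = (∑ i, w i * x1 i) + b * z ∧ 0 ≤ y1 ∧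
      (∀ i, L i * (1 - z) ≤ x0 i ∧ x0 i ≤ U i * (1 - z)) ∧
      (∀ i, L i * z ≤ x1 i ∧ x1 i ≤ U i * z) ∧
      0 ≤ z ∧ z ≤ 1}

open scoped Classical in
/-- Linear-time separation: the subset `Î` obtained by componentwise minimization
yields the smallest right-hand side, hence the most violated inequality. -/
theorem separation_most_violated {η : ℕ} (w : Fin η → ℝ) (b : ℝ)
    (L U : Fin η → ℝ) (hLU : ∀ i, L i < U i)
    (xh : Fin η → ℝ) (yh zh : ℝ)
    (hx : xh ∈ Box L U) (hy : 0 ≤ yh) (hz0 : 0 ≤ zh) (hz1 : zh ≤ 1) :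
    ∀ I : Finset (Fin η), (∀ i ∈ I, w i ≠ 0) →
      ((∑ i ∈ Finset.univ.filter
            (fun i => w i ≠ 0 ∧
              w i * xh i < w i * (Lbreve w L U i * (1 - zh) + Ubreve w L U i * zh)),
          w i * (xh i - Lbreve w L U i * (1 - zh)))
        + (b + ∑ i ∈ (Finset.univ.filter
            (fun i => w i ≠ 0 ∧
              w i * xh i < w i * (Lbreve w L U i * (1 - zh) + Ubreve w L U i * zh)))ᶜ,
          w i * Ubreve w L U i) * zh)
      ≤ ((∑ i ∈ I, w i * (xh i - Lbreve w L U i * (1 - zh)))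
        + (b + ∑ i ∈ Iᶜ, w i * Ubreve w L U i) * zh)
    ∧
    ∀ I : Finset (Fin η), (∀ i ∈ I, w i ≠ 0) →
      yh - ((∑ i ∈ I, w i * (xh i - Lbreve w L U i * (1 - zh)))
        + (b + ∑ i ∈ Iᶜ, w i * Ubreve w L U i) * zh)
      ≤ yh - ((∑ i ∈ Finset.univ.filter
            (fun i => w i ≠ 0 ∧
              w i * xh i < w i * (Lbreve w L U i * (1 - zh) + Ubreve w L U i * zh)),
          w i * (xh i - Lbreve w L U i * (1 - zh)))
        + (b + ∑ i ∈ (Finset.univ.filter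
            (fun i => w i ≠ 0 ∧
              w i * xh i < w i * (Lbreve w L U i * (1 - zh) + Ubreve w L U i * zh)))ᶜ,
          w i * Ubreve w L U i) * zh) := by
  classical
  set Lb := Lbreve w L U with hLb
  set Ub := Ubreve w L U with hUb
  set d : Fin η → ℝ := fun i => w i * xh i - w i * (Lb i * (1 - zh) + Ub i * zh) with hd
  have hSeq : (Finset.univ.filter (fun i => w i ≠ 0 ∧
        w i * xh i < w i * (Lb i * (1 - zh) + Ub i * zh)))
      = Finset.univ.filter (fun i => d i < 0) := by
    ext i
    simp only [Finset.mem_filter, Finset.mem_univ, true_and, hd]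
    constructor
    · rintro ⟨-, h⟩; linarith
    · intro h
      refine ⟨fun hw => ?_, by linarith⟩
      rw [hw] at h; simp at h
  have key : ∀ I : Finset (Fin η),
      ∑ i ∈ Finset.univ.filter (fun i => d i < 0), d i ≤ ∑ i ∈ I, d i := by
    intro I
    have hsub : I.filter (fun i => d i < 0) ⊆ Finset.univ.filter (fun i => d i < 0) := by
      intro i hi
      simp only [Finset.mem_filter, Finset.mem_univ, true_and]
      exact (Finset.mem_filter.mp hi).2
    have h1 : ∑ i ∈ Finset.univ.filter (fun i => d i < 0), d i
        ≤ ∑ i ∈ I.filter (fun i => d i < 0), d i := by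
      rw [← Finset.sum_sdiff hsub]
      have h0 : ∑ i ∈ (Finset.univ.filter (fun i => d i < 0)) \ (I.filter (fun i => d i < 0)), d i ≤ 0 := by
        apply Finset.sum_nonpos
        intro i hi
        have := (Finset.mem_filter.mp (Finset.mem_sdiff.mp hi).1).2
        linarith
      linarith
    have h2 : ∑ i ∈ I.filter (fun i => d i < 0), d i ≤ ∑ i ∈ I, d i := by
      apply Finset.sum_le_sum_of_subset_of_nonneg (Finset.filter_subset _ _)
      intro i hiI hi
      rw [Finset.mem_filter] at hi
      push_neg at hi
      exact hi hiI
    linarith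
  have hRHS : ∀ I : Finset (Fin η),
      (∑ i ∈ I, w i * (xh i - Lb i * (1 - zh))) + (b + ∑ i ∈ Iᶜ, w i * Ub i) * zh
      = (∑ i ∈ I, d i) + (b + ∑ i, w i * Ub i) * zh := by
    intro I
    have hc : ∑ i ∈ Iᶜ, w i * Ub i = (∑ i, w i * Ub i) - ∑ i ∈ I, w i * Ub i := by
      rw [eq_sub_iff_add_eq, Finset.sum_compl_add_sum]
    have hdI : ∑ i ∈ I, d i
        = (∑ i ∈ I, w i * (xh i - Lb i * (1 - zh))) - ∑ i ∈ I, w i * Ub i * zh := by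
      rw [← Finset.sum_sub_distrib]
      apply Finset.sum_congr rfl
      intro i _
      simp only [hd]; ring
    rw [hc, hdI, ← Finset.sum_mul]
    ring
  have main : ∀ I : Finset (Fin η),
      ((∑ i ∈ Finset.univ.filter
            (fun i => w i ≠ 0 ∧
              w i * xh i < w i * (Lb i * (1 - zh) + Ub i * zh)),
          w i * (xh i - Lb i * (1 - zh)))
        + (b + ∑ i ∈ (Finset.univ.filter
            (fun i => w i ≠ 0 ∧
              w i * xh i < w i * (Lb i * (1 - zh) + Ub i * zh)))ᶜ,
          w i * Ub i) * zh)
      ≤ ((∑ i ∈ I, w i * (xh i - Lb i * (1 - zh)))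
        + (b + ∑ i ∈ Iᶜ, w i * Ub i) * zh) := by
    intro I
    rw [hRHS, hRHS, hSeq]
    exact add_le_add (key I) le_rfl
  intro I hI
  exact ⟨main I, fun J _ => sub_le_sub_left (main J) yh⟩
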